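/- arXiv:1606.08405 — 3 statements merged into one kernel-verified Lean document; each statement's English description precedes it below -/
import Mathlib

section
/- (Proposition 1) Let H[1],…,H[K] ∈ ℂ^{N_r×N_t}, let R = (1/K) Σ_{k=1}^K H[k]* H[k] with eigenvalues λ_1(R) ≥ … ≥ λ_{N_t}(R) and corresponding orthonormal eigenvectors forming the columns of V_R, and let N_RF ≤ N_t. Then the supremum of the relaxed hybrid precoding objective J(F) = Σ_{k=1}^K ‖H[k] F (F*F)^{-1/2}‖_F² over all full-column-rank F ∈ ℂ^{N_t×N_RF} equals K Σ_{r=1}^{N_RF} λ_r(R), and it is attained by F = [V_R]_{1:N_RF} A for any invertible matrix A ∈ ℂ^{N_RF×N_RF}, where [V_R]_{1:N_RF} denotes the matrix whose columns are orthonormal eigenvectors for the N_RF largest eigenvalues of R. -/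
open Matrix BigOperators ComplexOrder

/-- Squared Frobenius norm of a complex matrix. -/
noncomputable def frobSq {m n : ℕ} (A : Matrix (Fin m) (Fin n) ℂ) : ℝ :=
  ∑ i, ∑ j, ‖A i j‖ ^ 2

/-- The square root of a positive semidefinite matrix, with the definition that
`Matrix.PosSemidef.sqrt` had in older Mathlib (since removed). -/
noncomputable def psdSqrt {n : Type*} [Fintype n] [DecidableEq n]
    {A : Matrix n n ℂ} (hA : A.PosSemidef) : Matrix n n ℂ :=
  (hA.1.eigenvectorUnitary : Matrix n n ℂ) *
    diagonal ((↑) ∘ (fun x : ℝ => Real.sqrt x) ∘ hA.1.eigenvalues) *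
    (star hA.1.eigenvectorUnitary : Matrix n n ℂ)

lemma psdSqrt_mul_self {n : ℕ} {M : Matrix (Fin n) (Fin n) ℂ} (hA : M.PosSemidef) :
    psdSqrt hA * psdSqrt hA = M := by
  have hU : (star hA.1.eigenvectorUnitary : Matrix (Fin n) (Fin n) ℂ) *
      (hA.1.eigenvectorUnitary : Matrix (Fin n) (Fin n) ℂ) = 1 := Unitary.coe_star_mul_self _
  conv_rhs => rw [hA.1.spectral_theorem, Unitary.conjStarAlgAut_apply]
  unfold psdSqrt
  have hD : diagonal ((↑) ∘ (fun x : ℝ => Real.sqrt x) ∘ hA.1.eigenvalues) *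
      diagonal ((↑) ∘ (fun x : ℝ => Real.sqrt x) ∘ hA.1.eigenvalues)
      = diagonal (RCLike.ofReal ∘ hA.1.eigenvalues : Fin n → ℂ) := by
    rw [diagonal_mul_diagonal]
    congr 1; ext i
    simp only [Function.comp_apply]
    rw [← Complex.ofReal_mul, Real.mul_self_sqrt (hA.eigenvalues_nonneg i)]
    rfl
  calc _ = (hA.1.eigenvectorUnitary : Matrix (Fin n) (Fin n) ℂ) *
        (diagonal ((↑) ∘ (fun x : ℝ => Real.sqrt x) ∘ hA.1.eigenvalues) *
        ((star hA.1.eigenvectorUnitary : Matrix (Fin n) (Fin n) ℂ) *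
        (hA.1.eigenvectorUnitary : Matrix (Fin n) (Fin n) ℂ)) *
        diagonal ((↑) ∘ (fun x : ℝ => Real.sqrt x) ∘ hA.1.eigenvalues)) *
        (star hA.1.eigenvectorUnitary : Matrix (Fin n) (Fin n) ℂ) := by
          simp only [Matrix.mul_assoc]
    _ = _ := by rw [hU, Matrix.mul_one, hD]

lemma psdSqrt_herm {n : ℕ} {M : Matrix (Fin n) (Fin n) ℂ} (hA : M.PosSemidef) :
    (psdSqrt hA)ᴴ = psdSqrt hA := by
  have hs : star ((↑) ∘ (fun x : ℝ => Real.sqrt x) ∘ hA.1.eigenvalues : Fin n → ℂ)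
      = ((↑) ∘ (fun x : ℝ => Real.sqrt x) ∘ hA.1.eigenvalues) := by
    funext i; simp
  unfold psdSqrt
  rw [Matrix.conjTranspose_mul, Matrix.conjTranspose_mul, diagonal_conjTranspose, hs]
  simp only [← Matrix.star_eq_conjTranspose, star_star, Matrix.mul_assoc]

section aux
open Finset

lemma filter_lt_eq_map {Nt NRF : ℕ} (hle : NRF ≤ Nt) :
    Finset.univ.filter (fun i : Fin Nt => (i : ℕ) < NRF)
      = Finset.univ.map (Fin.castLEEmb hle) := by
  ext i
  simp only [mem_filter, mem_univ, true_and, mem_map, Fin.castLEEmb_apply]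
  constructor
  · intro h; exact ⟨⟨i, h⟩, rfl⟩
  · rintro ⟨r, rfl⟩; exact r.2

lemma sum_castLE {Nt NRF : ℕ} (hle : NRF ≤ Nt) (f : Fin Nt → ℝ) :
    ∑ r : Fin NRF, f (Fin.castLE hle r)
      = ∑ i ∈ Finset.univ.filter (fun i : Fin Nt => (i : ℕ) < NRF), f i := by
  rw [filter_lt_eq_map hle, Finset.sum_map]
  rfl

lemma combin {Nt NRF : ℕ} (hle : NRF ≤ Nt) (μ : Fin Nt → ℝ) (hanti : Antitone μ)
    (w : Fin Nt → ℝ) (hw0 : ∀ i, 0 ≤ w i) (hw1 : ∀ i, w i ≤ 1)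
    (hsum : ∑ i, w i = NRF) :
    ∑ i, μ i * w i ≤ ∑ r : Fin NRF, μ (Fin.castLE hle r) := by
  rcases Nat.eq_zero_or_pos NRF with h0 | hpos
  · subst h0
    have : ∀ i ∈ Finset.univ, w i = 0 := by
      intro i _
      have := (Finset.sum_eq_zero_iff_of_nonneg (fun i _ => hw0 i)).mp (by simpa using hsum)
      exact this i (Finset.mem_univ i)
    rw [Finset.sum_eq_zero (fun i _ => by rw [this i (Finset.mem_univ i), mul_zero])]
    simp
  · set t : ℝ := μ ⟨NRF - 1, by omega⟩ with ht
    set S := Finset.univ.filter (fun i : Fin Nt => (i : ℕ) < NRF) with hS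
    rw [sum_castLE hle μ]
    have hcard : (S.card : ℝ) = NRF := by
      rw [hS, filter_lt_eq_map hle, Finset.card_map]; simp
    -- split sums
    have hsplit : ∀ f : Fin Nt → ℝ, ∑ i, f i = ∑ i ∈ S, f i + ∑ i ∈ Sᶜ, f i := by
      intro f; rw [Finset.sum_add_sum_compl]
    have h1 : ∀ i ∈ S, t * (1 - w i) ≤ μ i * (1 - w i) := by
      intro i hi
      have hiN : (i : ℕ) < NRF := by simpa [hS] using hi
      have : t ≤ μ i := hanti (by simp [Fin.le_def]; omega)
      exact mul_le_mul_of_nonneg_right this (by linarith [hw1 i])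
    have h2 : ∀ i ∈ Sᶜ, μ i * w i ≤ t * w i := by
      intro i hi
      have hiN : ¬ (i : ℕ) < NRF := by simpa [hS] using hi
      have : μ i ≤ t := hanti (by simp [Fin.le_def]; omega)
      exact mul_le_mul_of_nonneg_right this (hw0 i)
    have e1 : ∑ i ∈ S, (1 - w i) = ∑ i ∈ Sᶜ, w i := by
      have := hsplit w
      rw [Finset.sum_sub_distrib, Finset.sum_const, nsmul_eq_mul, mul_one]
      have : (S.card : ℝ) - ∑ i ∈ S, w i = ∑ i ∈ Sᶜ, w i := by
        rw [hcard]; rw [hsplit w] at hsum; linarith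
      linarith [this]
    calc ∑ i, μ i * w i = ∑ i ∈ S, μ i * w i + ∑ i ∈ Sᶜ, μ i * w i := hsplit _
      _ ≤ (∑ i ∈ S, μ i - ∑ i ∈ S, μ i * (1 - w i)) + ∑ i ∈ Sᶜ, t * w i := by
          have : ∑ i ∈ S, μ i * w i = ∑ i ∈ S, μ i - ∑ i ∈ S, μ i * (1 - w i) := by
            rw [← Finset.sum_sub_distrib]; congr 1; ext i; ring
          rw [this]
          exact add_le_add le_rfl (Finset.sum_le_sum h2)
      _ ≤ (∑ i ∈ S, μ i - ∑ i ∈ S, t * (1 - w i)) + ∑ i ∈ Sᶜ, t * w i := by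
          have := Finset.sum_le_sum h1
          linarith
      _ = ∑ i ∈ S, μ i := by
          rw [← Finset.mul_sum, ← Finset.mul_sum, e1]; ring

lemma frobSq_eq_trace {m n : ℕ} (A : Matrix (Fin m) (Fin n) ℂ) :
    frobSq A = (Matrix.trace (Aᴴ * A)).re := by
  unfold frobSq
  rw [Matrix.trace]
  simp only [Matrix.diag, Matrix.mul_apply, Matrix.conjTranspose_apply]
  rw [Complex.re_sum, Finset.sum_comm]
  congr 1; ext i
  rw [Complex.re_sum]
  congr 1; ext j
  rw [Complex.sq_norm, mul_comm]
  have : A j i * star (A j i) = (Complex.normSq (A j i) : ℂ) := Complex.mul_conj _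
  rw [this, Complex.ofReal_re]

lemma sqrt_isUnit_det {n : ℕ} {M : Matrix (Fin n) (Fin n) ℂ} (hPD : M.PosDef) :
    IsUnit (psdSqrt hPD.posSemidef).det := by
  have h1 : psdSqrt hPD.posSemidef * psdSqrt hPD.posSemidef = M := psdSqrt_mul_self hPD.posSemidef
  have h2 : (psdSqrt hPD.posSemidef).det * (psdSqrt hPD.posSemidef).det = M.det := by
    rw [← Matrix.det_mul, h1]
  have h3 : M.det ≠ 0 := ne_of_gt hPD.det_pos
  rw [isUnit_iff_ne_zero]
  intro h
  rw [h, zero_mul] at h2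
  exact h3 h2.symm

lemma Q_orthonormal {m n : ℕ} (F : Matrix (Fin m) (Fin n) ℂ) (hPD : (Fᴴ * F).PosDef) :
    (F * (psdSqrt hPD.posSemidef)⁻¹)ᴴ * (F * (psdSqrt hPD.posSemidef)⁻¹) = 1 := by
  set S := psdSqrt hPD.posSemidef with hS
  have hdet : IsUnit S.det := sqrt_isUnit_det hPD
  have hherm : Sᴴ = S := psdSqrt_herm hPD.posSemidef
  have hSS : S * S = Fᴴ * F := psdSqrt_mul_self hPD.posSemidef
  rw [Matrix.conjTranspose_mul, Matrix.conjTranspose_nonsing_inv, hherm]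
  calc S⁻¹ * Fᴴ * (F * S⁻¹) = S⁻¹ * (S * S) * S⁻¹ := by
        rw [hSS]; rw [Matrix.mul_assoc, Matrix.mul_assoc, Matrix.mul_assoc]
    _ = (S⁻¹ * S) * (S * S⁻¹) := by simp only [Matrix.mul_assoc]
    _ = 1 := by rw [Matrix.nonsing_inv_mul S hdet, Matrix.mul_nonsing_inv S hdet, one_mul]

lemma obj_eq_trace {K Nr Nt NRF : ℕ} (hK : 0 < K)
    (H : Fin K → Matrix (Fin Nr) (Fin Nt) ℂ)
    (R : Matrix (Fin Nt) (Fin Nt) ℂ)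
    (hR : R = (K : ℂ)⁻¹ • ∑ k, (H k)ᴴ * H k)
    (Q : Matrix (Fin Nt) (Fin NRF) ℂ) :
    ∑ k, frobSq (H k * Q) = K * (Matrix.trace (Qᴴ * R * Q)).re := by
  have hKne : (K : ℂ) ≠ 0 := Nat.cast_ne_zero.mpr hK.ne'
  have hsum : ∑ k, (H k)ᴴ * H k = (K : ℂ) • R := by
    rw [hR, smul_smul, mul_inv_cancel₀ hKne, one_smul]
  have step : ∑ k, frobSq (H k * Q)
      = (Matrix.trace (Qᴴ * (∑ k, (H k)ᴴ * H k) * Q)).re := by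
    rw [Matrix.mul_sum, Matrix.sum_mul, Matrix.trace_sum, Complex.re_sum]
    congr 1; ext k
    rw [frobSq_eq_trace]
    congr 2
    rw [Matrix.conjTranspose_mul]
    simp [Matrix.mul_assoc]
  rw [step, hsum, Matrix.mul_smul, Matrix.smul_mul, Matrix.trace_smul]
  rw [smul_eq_mul, Complex.mul_re]
  simp

section core
variable {Nt NRF : ℕ} (hle : NRF ≤ Nt)
  (R : Matrix (Fin Nt) (Fin Nt) ℂ)
  (μ : Fin Nt → ℝ)
  (V : Matrix (Fin Nt) (Fin Nt) ℂ)

lemma RV_eq (heig : ∀ j : Fin Nt, R *ᵥ (fun i => V i j) = ((μ j : ℂ)) • (fun i => V i j)) :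
    R * V = V * (Matrix.diagonal (fun i => (μ i : ℂ))) := by
  ext i j
  rw [Matrix.mul_diagonal, Matrix.mul_apply]
  have := congr_fun (heig j) i
  simpa [Matrix.mulVec, dotProduct, mul_comm] using this

lemma trace_core_le (hanti : Antitone μ) (hV : Vᴴ * V = 1)
    (heig : ∀ j : Fin Nt, R *ᵥ (fun i => V i j) = ((μ j : ℂ)) • (fun i => V i j))
    (Q : Matrix (Fin Nt) (Fin NRF) ℂ) (hQ : Qᴴ * Q = 1) :
    (Matrix.trace (Qᴴ * R * Q)).re ≤ ∑ r : Fin NRF, μ (Fin.castLE hle r) := by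
  set D : Matrix (Fin Nt) (Fin Nt) ℂ := Matrix.diagonal (fun i => (μ i : ℂ)) with hD
  have hRV : R * V = V * D := RV_eq R μ V heig
  have hVVt : V * Vᴴ = 1 := mul_eq_one_comm.mp hV
  have hRdec : R = V * D * Vᴴ := by
    calc R = R * (V * Vᴴ) := by rw [hVVt, Matrix.mul_one]
      _ = (R * V) * Vᴴ := by rw [Matrix.mul_assoc]
      _ = V * D * Vᴴ := by rw [hRV]
  set P : Matrix (Fin Nt) (Fin NRF) ℂ := Vᴴ * Q with hP
  have hPP : Pᴴ * P = 1 := by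
    rw [hP, Matrix.conjTranspose_mul, Matrix.conjTranspose_conjTranspose]
    calc Qᴴ * V * (Vᴴ * Q) = Qᴴ * (V * Vᴴ) * Q := by simp only [Matrix.mul_assoc]
      _ = 1 := by rw [hVVt, Matrix.mul_one, hQ]
  have hQRQ : Qᴴ * R * Q = Pᴴ * D * P := by
    rw [hRdec, hP, Matrix.conjTranspose_mul, Matrix.conjTranspose_conjTranspose]
    simp only [Matrix.mul_assoc]
  set M : Matrix (Fin Nt) (Fin Nt) ℂ := P * Pᴴ with hM
  have hMM : M * M = M := by
    rw [hM]
    calc P * Pᴴ * (P * Pᴴ) = P * (Pᴴ * P) * Pᴴ := by simp only [Matrix.mul_assoc]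
      _ = P * Pᴴ := by rw [hPP, Matrix.mul_one]
  have hMherm : Mᴴ = M := by
    rw [hM, Matrix.conjTranspose_mul, Matrix.conjTranspose_conjTranspose]
  set w : Fin Nt → ℝ := fun i => ∑ j, Complex.normSq (P i j) with hw
  have hMii : ∀ i, M i i = ((w i : ℝ) : ℂ) := by
    intro i
    rw [hM, Matrix.mul_apply, hw, Complex.ofReal_sum]
    congr 1; ext j
    rw [Matrix.conjTranspose_apply]
    exact (Complex.mul_conj _)
  have hw0 : ∀ i, 0 ≤ w i := fun i => Finset.sum_nonneg fun j _ => Complex.normSq_nonneg _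
  have hw1 : ∀ i, w i ≤ 1 := by
    intro i
    have h1 : M i i = ∑ j, ((Complex.normSq (M i j) : ℝ) : ℂ) := by
      conv_lhs => rw [← hMM]
      rw [Matrix.mul_apply]
      congr 1; ext j
      have : M j i = star (M i j) := by
        conv_lhs => rw [← hMherm]
        rfl
      rw [this]
      exact Complex.mul_conj _
    have h2 : (w i : ℂ) = ∑ j, ((Complex.normSq (M i j) : ℝ) : ℂ) := by
      rw [← hMii]; exact h1
    have h3 : w i = ∑ j, Complex.normSq (M i j) := by
      rw [← Complex.ofReal_sum] at h2
      exact_mod_cast h2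
    have h4 : Complex.normSq (M i i) ≤ ∑ j, Complex.normSq (M i j) :=
      Finset.single_le_sum (fun j _ => Complex.normSq_nonneg _) (Finset.mem_univ i)
    have h5 : Complex.normSq (M i i) = w i ^ 2 := by
      rw [hMii i, Complex.normSq_ofReal, sq]
    nlinarith [hw0 i, h3, h4, h5]
  have hsumw : ∑ i, w i = NRF := by
    have hcol : ∀ j, ∑ i, Complex.normSq (P i j) = 1 := by
      intro j
      have h1 : (Pᴴ * P) j j = 1 := by rw [hPP]; simp
      rw [Matrix.mul_apply] at h1
      have h2 : ∑ i, ((Complex.normSq (P i j) : ℝ) : ℂ) = 1 := by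
        rw [← h1]
        congr 1; ext i
        rw [Matrix.conjTranspose_apply, mul_comm]
        exact (Complex.mul_conj _).symm
      exact_mod_cast (by rw [← Complex.ofReal_sum] at h2; exact_mod_cast h2 : (((∑ i, Complex.normSq (P i j)) : ℝ) : ℂ) = 1)
    rw [hw, Finset.sum_comm]
    simp [hcol]
  have htr : (Matrix.trace (Qᴴ * R * Q)).re = ∑ i, μ i * w i := by
    rw [hQRQ, Matrix.trace_mul_cycle]
    rw [← hM]
    rw [Matrix.trace]
    rw [Complex.re_sum]
    congr 1; ext i
    rw [Matrix.diag_apply, Matrix.mul_apply]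
    have : ∀ j, M i j * D j i = if j = i then M i i * (μ i : ℂ) else 0 := by
      intro j
      rw [hD, Matrix.diagonal_apply]
      split_ifs with h
      · subst h; simp
      · simp [h]
    rw [Finset.sum_congr rfl (fun j _ => this j), Finset.sum_ite_eq' Finset.univ i]
    simp [hMii i, mul_comm]
  rw [htr]
  exact combin hle μ hanti w hw0 hw1 hsumw

end core

lemma V1_orth {Nt NRF : ℕ} (hle : NRF ≤ Nt) (V : Matrix (Fin Nt) (Fin Nt) ℂ)
    (hV : Vᴴ * V = 1) :
    (V.submatrix id (Fin.castLE hle))ᴴ * (V.submatrix id (Fin.castLE hle)) = 1 := by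
  ext r s
  rw [Matrix.mul_apply]
  have h1 : (Vᴴ * V) (Fin.castLE hle r) (Fin.castLE hle s)
      = (1 : Matrix (Fin Nt) (Fin Nt) ℂ) (Fin.castLE hle r) (Fin.castLE hle s) := by rw [hV]
  rw [Matrix.mul_apply] at h1
  simp only [Matrix.conjTranspose_apply, Matrix.submatrix_apply, id_eq]
  have h2 : ∑ i, star (V i (Fin.castLE hle r)) * V i (Fin.castLE hle s)
      = (1 : Matrix (Fin Nt) (Fin Nt) ℂ) (Fin.castLE hle r) (Fin.castLE hle s) := by
    rw [← h1]; congr 1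
  rw [h2, Matrix.one_apply, Matrix.one_apply]
  simp [(Fin.castLE_injective hle).eq_iff]

lemma posDef_conjTranspose_mul_self_of_isUnit {n : ℕ} (A : Matrix (Fin n) (Fin n) ℂ)
    (hA : IsUnit A.det) : (Aᴴ * A).PosDef := by
  refine Matrix.PosDef.of_dotProduct_mulVec_pos (Matrix.isHermitian_conjTranspose_mul_self A) (fun x hx => ?_)
  have hinj : Function.Injective A.mulVec := Matrix.mulVec_injective_iff_isUnit.mpr
    ((Matrix.isUnit_iff_isUnit_det A).mpr hA)
  have hAx : A *ᵥ x ≠ 0 := by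
    intro h
    exact hx (hinj (by rw [h, Matrix.mulVec_zero]))
  have heq : star x ⬝ᵥ ((Aᴴ * A) *ᵥ x) = star (A *ᵥ x) ⬝ᵥ (A *ᵥ x) := by
    rw [← Matrix.mulVec_mulVec, Matrix.dotProduct_mulVec, ← Matrix.star_mulVec]
  rw [heq]
  exact Matrix.dotProduct_star_self_pos_iff.mpr hAx

lemma trace_core_eq {Nt NRF : ℕ} (hle : NRF ≤ Nt)
    (R : Matrix (Fin Nt) (Fin Nt) ℂ) (μ : Fin Nt → ℝ)
    (V : Matrix (Fin Nt) (Fin Nt) ℂ) (hV : Vᴴ * V = 1)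
    (heig : ∀ j : Fin Nt, R *ᵥ (fun i => V i j) = ((μ j : ℂ)) • (fun i => V i j))
    (hV1 : (V.submatrix id (Fin.castLE hle))ᴴ * (V.submatrix id (Fin.castLE hle)) = 1)
    (A : Matrix (Fin NRF) (Fin NRF) ℂ) (hA : IsUnit A.det)
    (S : Matrix (Fin NRF) (Fin NRF) ℂ) (hSh : Sᴴ = S) (hSdet : IsUnit S.det)
    (hSS : S * S = (V.submatrix id (Fin.castLE hle) * A)ᴴ * (V.submatrix id (Fin.castLE hle) * A)) :
    (Matrix.trace ((V.submatrix id (Fin.castLE hle) * A * S⁻¹)ᴴ * R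
        * (V.submatrix id (Fin.castLE hle) * A * S⁻¹))).re
      = ∑ r : Fin NRF, μ (Fin.castLE hle r) := by
  set V1 := V.submatrix id (Fin.castLE hle) with hV1def
  set D1 : Matrix (Fin NRF) (Fin NRF) ℂ := Matrix.diagonal (fun r => (μ (Fin.castLE hle r) : ℂ)) with hD1
  have hAHdet : IsUnit Aᴴ.det := by
    rw [Matrix.det_conjTranspose]; exact hA.star
  -- R * V1 = V1 * D1
  have hRV1 : R * V1 = V1 * D1 := by
    ext i r
    rw [Matrix.mul_diagonal, Matrix.mul_apply]
    have := congr_fun (heig (Fin.castLE hle r)) i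
    simpa [Matrix.mulVec, dotProduct, mul_comm, hV1def] using this
  -- FᴴF = AᴴA
  have hFF : (V1 * A)ᴴ * (V1 * A) = Aᴴ * A := by
    rw [Matrix.conjTranspose_mul]
    calc Aᴴ * V1ᴴ * (V1 * A) = Aᴴ * (V1ᴴ * V1) * A := by simp only [Matrix.mul_assoc]
      _ = Aᴴ * A := by rw [hV1, Matrix.mul_one]
  -- Qᴴ R Q = S⁻¹ * (Aᴴ * D1 * A) * S⁻¹
  have hstep : (V1 * A * S⁻¹)ᴴ * R * (V1 * A * S⁻¹)
      = S⁻¹ * (Aᴴ * D1 * A) * S⁻¹ := by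
    rw [Matrix.conjTranspose_mul, Matrix.conjTranspose_mul,
      Matrix.conjTranspose_nonsing_inv, hSh]
    calc S⁻¹ * (Aᴴ * V1ᴴ) * R * (V1 * A * S⁻¹)
        = S⁻¹ * (Aᴴ * (V1ᴴ * (R * V1)) * A) * S⁻¹ := by simp only [Matrix.mul_assoc]
      _ = S⁻¹ * (Aᴴ * (V1ᴴ * (V1 * D1)) * A) * S⁻¹ := by rw [hRV1]
      _ = S⁻¹ * (Aᴴ * ((V1ᴴ * V1) * D1) * A) * S⁻¹ := by simp only [Matrix.mul_assoc]
      _ = S⁻¹ * (Aᴴ * D1 * A) * S⁻¹ := by rw [hV1, Matrix.one_mul]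
  rw [hstep]
  have htr : Matrix.trace (S⁻¹ * (Aᴴ * D1 * A) * S⁻¹) = Matrix.trace D1 := by
    rw [Matrix.trace_mul_cycle]
    have hSinv : S⁻¹ * S⁻¹ = (Aᴴ * A)⁻¹ := by
      rw [← Matrix.mul_inv_rev, hSS, hFF]
    rw [hSinv]
    have : (Aᴴ * A)⁻¹ * (Aᴴ * D1 * A) = A⁻¹ * (Aᴴ)⁻¹ * Aᴴ * D1 * A := by
      rw [Matrix.mul_inv_rev]
      simp only [Matrix.mul_assoc]
    rw [this]
    have h2 : (Aᴴ)⁻¹ * Aᴴ = 1 := Matrix.nonsing_inv_mul _ hAHdet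
    calc Matrix.trace (A⁻¹ * (Aᴴ)⁻¹ * Aᴴ * D1 * A)
        = Matrix.trace (A⁻¹ * (((Aᴴ)⁻¹ * Aᴴ) * (D1 * A))) := by simp only [Matrix.mul_assoc]
      _ = Matrix.trace (A⁻¹ * (D1 * A)) := by rw [h2, Matrix.one_mul]
      _ = Matrix.trace (D1 * A * A⁻¹) := Matrix.trace_mul_comm _ _
      _ = Matrix.trace D1 := by
          rw [Matrix.mul_assoc, Matrix.mul_nonsing_inv _ hA, Matrix.mul_one]
  rw [htr, hD1, Matrix.trace_diagonal, Complex.re_sum]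
  simp

end aux

/-- Proposition 1: With `R = (1/K) ∑ₖ H[k]ᴴ H[k]`, eigenvalues `μ` in
non-increasing order with corresponding orthonormal eigenvectors forming the columns of
the unitary `V`, and `N_RF ≤ N_t`, the relaxed objective
`J(F) = ∑ₖ ‖H[k] F (FᴴF)^{-1/2}‖_F²` over full-column-rank `F` is bounded above by
`K ∑_{r < N_RF} μ r`, and this value is attained by `F = [V]_{1:N_RF} A` for every
invertible `A`. -/
theorem stmt_3 (K Nr Nt NRF : ℕ) (hK : 0 < K) (hle : NRF ≤ Nt)
    (H : Fin K → Matrix (Fin Nr) (Fin Nt) ℂ)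
    (R : Matrix (Fin Nt) (Fin Nt) ℂ)
    (hR : R = (K : ℂ)⁻¹ • ∑ k, (H k)ᴴ * H k)
    (μ : Fin Nt → ℝ) (hanti : Antitone μ)
    (V : Matrix (Fin Nt) (Fin Nt) ℂ)
    (hV : Vᴴ * V = 1)
    (heig : ∀ j : Fin Nt, R *ᵥ (fun i => V i j) = ((μ j : ℂ)) • (fun i => V i j)) :
    (∀ F : Matrix (Fin Nt) (Fin NRF) ℂ, F.rank = NRF →
      ∀ hPD : (Fᴴ * F).PosDef,
        ∑ k, frobSq (H k * F * (psdSqrt hPD.posSemidef)⁻¹)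
          ≤ K * ∑ r : Fin NRF, μ (Fin.castLE hle r)) ∧
    (∀ A : Matrix (Fin NRF) (Fin NRF) ℂ, IsUnit A.det →
      ∃ hPD : ((V.submatrix id (Fin.castLE hle) * A)ᴴ *
                (V.submatrix id (Fin.castLE hle) * A)).PosDef,
        ∑ k, frobSq (H k * (V.submatrix id (Fin.castLE hle) * A) * (psdSqrt hPD.posSemidef)⁻¹)
          = K * ∑ r : Fin NRF, μ (Fin.castLE hle r)) := by
  constructor
  · intro F _hrank hPD
    have hQ : (F * (psdSqrt hPD.posSemidef)⁻¹)ᴴ * (F * (psdSqrt hPD.posSemidef)⁻¹) = 1 :=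
      Q_orthonormal F hPD
    have hre : ∑ k, frobSq (H k * F * (psdSqrt hPD.posSemidef)⁻¹)
        = ∑ k, frobSq (H k * (F * (psdSqrt hPD.posSemidef)⁻¹)) := by
      congr 1; ext k; rw [Matrix.mul_assoc]
    rw [hre, obj_eq_trace hK H R hR]
    have hb := trace_core_le hle R μ V hanti hV heig _ hQ
    have hK0 : (0:ℝ) ≤ (K:ℝ) := Nat.cast_nonneg K
    exact mul_le_mul_of_nonneg_left hb hK0
  · intro A hA
    have hV1 := V1_orth hle V hV
    have hFF : (V.submatrix id (Fin.castLE hle) * A)ᴴ * (V.submatrix id (Fin.castLE hle) * A)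
        = Aᴴ * A := by
      rw [Matrix.conjTranspose_mul]
      calc Aᴴ * (V.submatrix id (Fin.castLE hle))ᴴ * (V.submatrix id (Fin.castLE hle) * A)
          = Aᴴ * ((V.submatrix id (Fin.castLE hle))ᴴ * (V.submatrix id (Fin.castLE hle))) * A := by
            simp only [Matrix.mul_assoc]
        _ = Aᴴ * A := by rw [hV1, Matrix.mul_one]
    have hPD : ((V.submatrix id (Fin.castLE hle) * A)ᴴ *
        (V.submatrix id (Fin.castLE hle) * A)).PosDef := by
      rw [hFF]; exact posDef_conjTranspose_mul_self_of_isUnit A hA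
    refine ⟨hPD, ?_⟩
    have hSh : (psdSqrt hPD.posSemidef)ᴴ = psdSqrt hPD.posSemidef := psdSqrt_herm hPD.posSemidef
    have hSdet : IsUnit (psdSqrt hPD.posSemidef).det := sqrt_isUnit_det hPD
    have hSS := psdSqrt_mul_self hPD.posSemidef
    have hre : ∑ k, frobSq (H k * (V.submatrix id (Fin.castLE hle) * A) * (psdSqrt hPD.posSemidef)⁻¹)
        = ∑ k, frobSq (H k * ((V.submatrix id (Fin.castLE hle) * A) * (psdSqrt hPD.posSemidef)⁻¹)) := by
      congr 1; ext k; rw [Matrix.mul_assoc]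
    rw [hre, obj_eq_trace hK H R hR]
    rw [trace_core_eq hle R μ V hV heig hV1 A hA _ hSh hSdet hSS]
end

section
/- (Proposition 2) Let H[1],…,H[K] ∈ ℂ^{N_r×N_t}, R = (1/K) Σ_{k=1}^K H[k]* H[k], and let S_1,…,S_{N_RF} be a partition of {1,…,N_t} into nonempty disjoint subsets. Over all block-structured analog precoders F ∈ ℂ^{N_t×N_RF} whose r-th column is supported on S_r with nonzero block f_r, the supremum of Σ_{k=1}^K ‖H[k] F (F*F)^{-1/2}‖_F² equals K Σ_{r=1}^{N_RF} λ_1(R_{S_r}), where λ_1(R_{S_r}) is the largest eigenvalue of the principal submatrix R_{S_r}; the supremum is attained when each block equals f_r = α_r v_{S_r,1} for any nonzero scalars α_r, with v_{S_r,1} a unit eigenvector of R_{S_r} for its largest eigenvalue. -/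
open Matrix BigOperators ComplexOrder

/-- The square root of a positive semidefinite matrix, as defined in the older Mathlib. -/
noncomputable def Matrix.PosSemidef.sqrt {n 𝕜 : Type*} [Fintype n] [DecidableEq n] [RCLike 𝕜]
    {A : Matrix n n 𝕜} (hA : A.PosSemidef) : Matrix n n 𝕜 :=
  (hA.1.eigenvectorUnitary : Matrix n n 𝕜) * diagonal ((↑) ∘ (√·) ∘ hA.1.eigenvalues) *
    (star (hA.1.eigenvectorUnitary : Matrix n n 𝕜))

lemma sqrt_eq_of_sq' {n : Type*} [Fintype n] [DecidableEq n] {A D : Matrix n n ℂ}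
    (hA : A.PosSemidef) (hD : D.PosSemidef) (h : D ^ 2 = A) : hA.sqrt = D := by
  have hsa : IsSelfAdjoint D := hD.1
  have e1 : hA.sqrt = cfc Real.sqrt A := by
    rw [hA.1.cfc_eq, IsHermitian.cfc, Unitary.conjStarAlgAut_apply]; rfl
  rw [e1, ← h, ← cfc_pow_id (R := ℝ) D 2 hsa, ← cfc_comp Real.sqrt (fun x : ℝ => x ^ 2) D hsa]
  calc cfc (Real.sqrt ∘ fun x : ℝ => x ^ 2) D = cfc (id : ℝ → ℝ) D := by
        rw [hD.1.cfc_eq, hD.1.cfc_eq, IsHermitian.cfc, IsHermitian.cfc]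
        congr 2
        funext i
        simp [Real.sqrt_sq (hD.eigenvalues_nonneg i)]
    _ = D := cfc_id ℝ D hsa


lemma sum_eq_sum_subtype {Nt : ℕ} (s : Finset (Fin Nt)) (φ : Fin Nt → ℂ)
    (hφ : ∀ i, i ∉ s → φ i = 0) : ∑ i, φ i = ∑ x : {i // i ∈ s}, φ x := by
  rw [Finset.sum_coe_sort s φ]
  exact (Finset.sum_subset (Finset.subset_univ s) (fun i _ hi => hφ i hi)).symm

lemma quad_restrict {Nt : ℕ} (s : Finset (Fin Nt)) (M : Matrix (Fin Nt) (Fin Nt) ℂ)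
    (g : {i // i ∈ s} → ℂ) (w : Fin Nt → ℂ)
    (hw : ∀ i, w i = if h : i ∈ s then g ⟨i, h⟩ else 0) :
    star w ⬝ᵥ (M *ᵥ w) =
      star g ⬝ᵥ ((M.submatrix (Subtype.val : {i // i ∈ s} → Fin Nt) Subtype.val) *ᵥ g) := by
  have hw0 : ∀ i, i ∉ s → w i = 0 := fun i hi => by rw [hw i, dif_neg hi]
  have hws : ∀ (x : {i // i ∈ s}), w x = g x := fun x => by
    rw [hw x, dif_pos x.2]
  simp only [dotProduct, mulVec, Pi.star_apply]
  rw [sum_eq_sum_subtype s _ (fun i hi => by rw [hw0 i hi, star_zero, zero_mul])]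
  refine Finset.sum_congr rfl fun x _ => ?_
  rw [hws x]
  congr 1
  rw [sum_eq_sum_subtype s _ (fun j hj => by rw [hw0 j hj, mul_zero])]
  exact Finset.sum_congr rfl fun y _ => by rw [hws y, submatrix_apply]

lemma conj_mul_diag {NRF Nt : ℕ} (W : Matrix (Fin Nt) (Fin NRF) ℂ)
    (M : Matrix (Fin Nt) (Fin Nt) ℂ) (r : Fin NRF) :
    (Wᴴ * M * W) r r = star (fun i => W i r) ⬝ᵥ (M *ᵥ (fun i => W i r)) := by
  simp only [Matrix.mul_apply, dotProduct, mulVec, conjTranspose_apply, Pi.star_apply,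
    Finset.sum_mul, Finset.mul_sum]
  rw [Finset.sum_comm]
  exact Finset.sum_congr rfl fun i _ => Finset.sum_congr rfl fun j _ => by ring

lemma norm_sq_dot {n : Type*} [Fintype n] (z : n → ℂ) :
    (star z ⬝ᵥ z).re = ∑ x, ‖z x‖ ^ 2 := by
  simp [dotProduct, Complex.re_sum, ← Complex.normSq_eq_conj_mul_self, Complex.sq_norm]

lemma rayleigh_bound {n : Type*} [Fintype n] [DecidableEq n]
    {B : Matrix n n ℂ} (hB : B.IsHermitian) {μ : ℝ}
    (hμ : ∀ i, hB.eigenvalues i ≤ μ) (g : n → ℂ) :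
    (star g ⬝ᵥ (B *ᵥ g)).re ≤ μ * ∑ x, ‖g x‖ ^ 2 := by
  set V : Matrix n n ℂ := (hB.eigenvectorUnitary : Matrix n n ℂ) with hV
  set y : n → ℂ := star V *ᵥ g with hy
  have hsy : star y = star g ᵥ* V := by
    rw [hy, star_mulVec, star_eq_conjTranspose, conjTranspose_conjTranspose]
  have key : star g ⬝ᵥ (B *ᵥ g)
      = star y ⬝ᵥ ((diagonal (RCLike.ofReal ∘ hB.eigenvalues)) *ᵥ y) := by
    conv_lhs => rw [hB.spectral_theorem, Unitary.conjStarAlgAut_apply]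
    rw [← mulVec_mulVec, ← mulVec_mulVec, dotProduct_mulVec, ← hsy]
  have hyy : ∑ x, ‖y x‖ ^ 2 = ∑ x, ‖g x‖ ^ 2 := by
    rw [← norm_sq_dot, ← norm_sq_dot]
    congr 1
    rw [hsy, hy, ← dotProduct_mulVec, mulVec_mulVec,
      (Matrix.mem_unitaryGroup_iff).mp (hB.eigenvectorUnitary).2, one_mulVec]
  have hterm : ∀ (c : ℝ) (z : ℂ), (star z * (RCLike.ofReal c * z)).re
      = c * ‖z‖ ^ 2 := by
    intro c z
    show (star z * ((c : ℂ) * z)).re = c * ‖z‖ ^ 2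
    rw [mul_left_comm, Complex.star_def, ← Complex.normSq_eq_conj_mul_self,
      ← Complex.ofReal_mul]
    simp [Complex.sq_norm]
  have hdq : (star y ⬝ᵥ ((diagonal (RCLike.ofReal ∘ hB.eigenvalues)) *ᵥ y)).re
      = ∑ i, hB.eigenvalues i * ‖y i‖ ^ 2 := by
    simp only [dotProduct, mulVec_diagonal, Pi.star_apply, Complex.re_sum, Function.comp]
    refine Finset.sum_congr rfl fun i _ => hterm _ _
  rw [key, ← hyy, hdq]
  calc ∑ i, hB.eigenvalues i * ‖y i‖ ^ 2
      ≤ ∑ i, μ * ‖y i‖ ^ 2 :=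
        Finset.sum_le_sum fun i _ => mul_le_mul_of_nonneg_right (hμ i) (by positivity)
    _ = μ * ∑ x, ‖y x‖ ^ 2 := by rw [Finset.mul_sum]

lemma quad_eigen {n : Type*} [Fintype n] (B : Matrix n n ℂ) (μ : ℝ) (vv : n → ℂ)
    (hv : B *ᵥ vv = (μ : ℂ) • vv) (hunit : ∑ x, ‖vv x‖ ^ 2 = 1) (β : ℂ) :
    (star (β • vv) ⬝ᵥ (B *ᵥ (β • vv))).re = ‖β‖ ^ 2 * μ := by
  have hvv : star vv ⬝ᵥ vv = 1 := by
    have him : star vv ⬝ᵥ vv = ((∑ x, ‖vv x‖ ^ 2 : ℝ) : ℂ) := by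
      rw [Complex.ofReal_sum]
      simp [dotProduct, ← Complex.normSq_eq_conj_mul_self, Complex.sq_norm]
    rw [him, hunit, Complex.ofReal_one]
  rw [mulVec_smul, hv, star_smul, smul_dotProduct, dotProduct_smul, dotProduct_smul, hvv]
  simp only [smul_eq_mul, mul_one]
  rw [← mul_assoc, Complex.star_def, mul_comm ((starRingEnd ℂ) β), Complex.mul_conj,
    ← Complex.ofReal_mul]
  simp [Complex.sq_norm]


lemma frobSq_eq_diag {Nr NRF : ℕ} (A : Matrix (Fin Nr) (Fin NRF) ℂ) :
    frobSq A = ∑ r, ((Aᴴ * A) r r).re := by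
  unfold frobSq
  rw [Finset.sum_comm]
  refine Finset.sum_congr rfl fun r _ => ?_
  simp [Matrix.mul_apply, conjTranspose_apply, Complex.re_sum,
    ← Complex.normSq_eq_conj_mul_self, Complex.sq_norm]

lemma objective_eq {Kn Nr Nt NRF : ℕ} (hK : 0 < Kn)
    (H : Fin Kn → Matrix (Fin Nr) (Fin Nt) ℂ)
    (R : Matrix (Fin Nt) (Fin Nt) ℂ)
    (hR : R = (Kn : ℂ)⁻¹ • ∑ k, (H k)ᴴ * H k)
    (S : Fin NRF → Finset (Fin Nt))
    (g : (r : Fin NRF) → ({i // i ∈ S r} → ℂ))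
    (W : Matrix (Fin Nt) (Fin NRF) ℂ)
    (hW : ∀ i r, W i r = if h : i ∈ S r then g r ⟨i, h⟩ else 0) :
    ∑ k, frobSq (H k * W) = Kn * ∑ r, (star (g r) ⬝ᵥ
      ((R.submatrix (Subtype.val : {i // i ∈ S r} → Fin Nt) Subtype.val) *ᵥ g r)).re := by
  have hKne : (Kn : ℂ) ≠ 0 := by exact_mod_cast hK.ne'
  have hsum : ∑ k, (H k)ᴴ * H k = (Kn : ℂ) • R := by
    rw [hR, smul_inv_smul₀ hKne]
  have hmat : ∀ k, (H k * W)ᴴ * (H k * W) = Wᴴ * ((H k)ᴴ * H k) * W := fun k => by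
    rw [conjTranspose_mul]
    simp only [Matrix.mul_assoc]
  calc ∑ k, frobSq (H k * W)
      = ∑ k, ∑ r, ((Wᴴ * ((H k)ᴴ * H k) * W) r r).re := by
        refine Finset.sum_congr rfl fun k _ => ?_
        rw [frobSq_eq_diag, hmat k]
    _ = ∑ r, ((Wᴴ * ((Kn : ℂ) • R) * W) r r).re := by
        rw [Finset.sum_comm]
        refine Finset.sum_congr rfl fun r _ => ?_
        rw [← Complex.re_sum]
        congr 1
        rw [← hsum, Matrix.mul_sum, Matrix.sum_mul, Matrix.sum_apply]
    _ = Kn * ∑ r, (star (g r) ⬝ᵥ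
        ((R.submatrix (Subtype.val : {i // i ∈ S r} → Fin Nt) Subtype.val) *ᵥ g r)).re := by
        rw [Finset.mul_sum]
        refine Finset.sum_congr rfl fun r _ => ?_
        rw [conj_mul_diag W ((Kn : ℂ) • R) r, smul_mulVec, dotProduct_smul,
          smul_eq_mul, show ((Kn : ℕ) : ℂ) = ((Kn : ℝ) : ℂ) by push_cast; ring,
          Complex.re_ofReal_mul,
          quad_restrict (S r) R (g r) (fun i => W i r) (fun i => hW i r)]

lemma gram_diag {Nt NRF : ℕ} (S : Fin NRF → Finset (Fin Nt))
    (hdisj : ∀ r s, r ≠ s → Disjoint (S r) (S s))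
    (f : (r : Fin NRF) → ({i // i ∈ S r} → ℂ))
    (F : Matrix (Fin Nt) (Fin NRF) ℂ)
    (hF : ∀ i r, F i r = if h : i ∈ S r then f r ⟨i, h⟩ else 0) :
    Fᴴ * F = diagonal (fun r => ((∑ x, ‖f r x‖ ^ 2 : ℝ) : ℂ)) := by
  ext r s
  rw [Matrix.mul_apply]
  by_cases hrs : r = s
  · subst hrs
    rw [diagonal_apply_eq, Complex.ofReal_sum]
    rw [sum_eq_sum_subtype (S r) _ (fun i hi => by
      rw [conjTranspose_apply, hF i r, dif_neg hi, star_zero, zero_mul])]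
    refine Finset.sum_congr rfl fun x _ => ?_
    rw [conjTranspose_apply, hF, dif_pos x.2, Subtype.coe_eta, Complex.star_def,
      ← Complex.normSq_eq_conj_mul_self, Complex.sq_norm]
  · rw [diagonal_apply_ne _ hrs]
    refine Finset.sum_eq_zero fun i _ => ?_
    rw [conjTranspose_apply, hF i r, hF i s]
    by_cases h1 : i ∈ S r
    · by_cases h2 : i ∈ S s
      · exact absurd h2 (Finset.disjoint_left.mp (hdisj r s hrs) h1)
      · rw [dif_neg h2, mul_zero]
    · rw [dif_neg h1, star_zero, zero_mul]

lemma main_calc {Kn Nr Nt NRF : ℕ} (hK : 0 < Kn)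
    (H : Fin Kn → Matrix (Fin Nr) (Fin Nt) ℂ)
    (R : Matrix (Fin Nt) (Fin Nt) ℂ)
    (hR : R = (Kn : ℂ)⁻¹ • ∑ k, (H k)ᴴ * H k)
    (S : Fin NRF → Finset (Fin Nt))
    (hdisj : ∀ r s, r ≠ s → Disjoint (S r) (S s))
    (f : (r : Fin NRF) → ({i // i ∈ S r} → ℂ))
    (hfpos : ∀ r, 0 < ∑ x, ‖f r x‖ ^ 2)
    (F : Matrix (Fin Nt) (Fin NRF) ℂ)
    (hF : ∀ i r, F i r = if h : i ∈ S r then f r ⟨i, h⟩ else 0)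
    (hPD : (Fᴴ * F).PosDef) :
    ∑ k, frobSq (H k * F * (hPD.posSemidef.sqrt)⁻¹) =
      Kn * ∑ r, (star (fun x => f r x *
          (((Real.sqrt (∑ y, ‖f r y‖ ^ 2) : ℝ) : ℂ))⁻¹) ⬝ᵥ
        ((R.submatrix (Subtype.val : {i // i ∈ S r} → Fin Nt) Subtype.val) *ᵥ
          (fun x => f r x *
          (((Real.sqrt (∑ y, ‖f r y‖ ^ 2) : ℝ) : ℂ))⁻¹))).re := by
  set c : Fin NRF → ℝ := fun r => ∑ y, ‖f r y‖ ^ 2 with hc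
  have hFF : Fᴴ * F = diagonal (fun r => ((c r : ℝ) : ℂ)) := gram_diag S hdisj f F hF
  have hdpsd : (diagonal (fun r => ((Real.sqrt (c r) : ℝ) : ℂ))).PosSemidef :=
    posSemidef_diagonal_iff.mpr fun r => Complex.zero_le_real.mpr (Real.sqrt_nonneg _)
  have hsq2 : (diagonal (fun r => ((Real.sqrt (c r) : ℝ) : ℂ))) ^ 2 = Fᴴ * F := by
    rw [hFF, pow_two, diagonal_mul_diagonal]
    exact congrArg Matrix.diagonal (funext fun r => by
      rw [← Complex.ofReal_mul, Real.mul_self_sqrt (hfpos r).le])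
  have hsqrt : hPD.posSemidef.sqrt = diagonal (fun r => ((Real.sqrt (c r) : ℝ) : ℂ)) :=
    sqrt_eq_of_sq' hPD.posSemidef hdpsd hsq2
  have hinv : (diagonal (fun r => ((Real.sqrt (c r) : ℝ) : ℂ)))⁻¹
      = diagonal (fun r => (((Real.sqrt (c r))⁻¹ : ℝ) : ℂ)) := by
    apply Matrix.inv_eq_left_inv
    rw [diagonal_mul_diagonal, ← Matrix.diagonal_one]
    exact congrArg Matrix.diagonal (funext fun r => by
      rw [← Complex.ofReal_mul, inv_mul_cancel₀ (Real.sqrt_ne_zero'.mpr (hfpos r)),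
        Complex.ofReal_one])
  have hW : ∀ i r, (F * (hPD.posSemidef.sqrt)⁻¹) i r =
      if h : i ∈ S r then f r ⟨i, h⟩ * (((Real.sqrt (c r) : ℝ) : ℂ))⁻¹ else 0 := by
    intro i r
    rw [hsqrt, hinv, Matrix.mul_diagonal, hF i r]
    by_cases h : i ∈ S r
    · rw [dif_pos h, dif_pos h, Complex.ofReal_inv]
    · rw [dif_neg h, dif_neg h, zero_mul]
  have := objective_eq hK H R hR S
    (fun r x => f r x * (((Real.sqrt (c r) : ℝ) : ℂ))⁻¹) _ hW
  simp only [Matrix.mul_assoc] at this ⊢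
  exact this

/-- Proposition 2: For a partition `S₁,…,S_{N_RF}` of the antennas, over
all block-structured analog precoders `F` (whose `r`-th column is supported on `S_r`
with nonzero block `f_r`), the relaxed objective `∑ₖ ‖H[k] F (FᴴF)^{-1/2}‖_F²` is
bounded above by `K ∑ᵣ λ₁(R_{S_r})`, the sum of the largest eigenvalues of the
principal submatrices `R_{S_r}`, and this value is attained when each block is
`f_r = α_r • v_r` for nonzero scalars `α_r`, with `v_r` a unit eigenvector of `R_{S_r}`
for its largest eigenvalue `μ r`. -/
theorem stmt_9 (Kn Nr Nt NRF : ℕ) (hK : 0 < Kn)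
    (H : Fin Kn → Matrix (Fin Nr) (Fin Nt) ℂ)
    (R : Matrix (Fin Nt) (Fin Nt) ℂ)
    (hR : R = (Kn : ℂ)⁻¹ • ∑ k, (H k)ᴴ * H k)
    (S : Fin NRF → Finset (Fin Nt))
    (hnonempty : ∀ r, (S r).Nonempty)
    (hdisj : ∀ r s, r ≠ s → Disjoint (S r) (S s))
    (hcover : ∀ i, ∃ r, i ∈ S r)
    (hHerm : ∀ r, ((R.submatrix (Subtype.val : {i // i ∈ S r} → Fin Nt)
        (Subtype.val : {i // i ∈ S r} → Fin Nt)).IsHermitian))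
    (μ : Fin NRF → ℝ)
    (hμ : ∀ r, IsGreatest (Set.range (hHerm r).eigenvalues) (μ r))
    (v : (r : Fin NRF) → ({i // i ∈ S r} → ℂ))
    (hvUnit : ∀ r, ∑ x, ‖v r x‖ ^ 2 = 1)
    (hvEig : ∀ r, (R.submatrix (Subtype.val : {i // i ∈ S r} → Fin Nt)
        (Subtype.val : {i // i ∈ S r} → Fin Nt)) *ᵥ v r = ((μ r : ℂ)) • v r) :
    (∀ (f : (r : Fin NRF) → ({i // i ∈ S r} → ℂ)), (∀ r, f r ≠ 0) →
      ∀ F : Matrix (Fin Nt) (Fin NRF) ℂ,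
        (∀ i r, F i r = if h : i ∈ S r then f r ⟨i, h⟩ else 0) →
        ∀ hPD : (Fᴴ * F).PosDef,
          ∑ k, frobSq (H k * F * (hPD.posSemidef.sqrt)⁻¹) ≤ Kn * ∑ r, μ r) ∧
    (∀ α : Fin NRF → ℂ, (∀ r, α r ≠ 0) →
      ∀ F : Matrix (Fin Nt) (Fin NRF) ℂ,
        (∀ i r, F i r = if h : i ∈ S r then α r * v r ⟨i, h⟩ else 0) →
        ∃ hPD : (Fᴴ * F).PosDef,
          ∑ k, frobSq (H k * F * (hPD.posSemidef.sqrt)⁻¹) = Kn * ∑ r, μ r) := by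
  constructor
  · intro f hf F hF hPD
    have hfpos : ∀ r, 0 < ∑ x, ‖f r x‖ ^ 2 := by
      intro r
      obtain ⟨x, hx⟩ := Function.ne_iff.mp (hf r)
      exact Finset.sum_pos' (fun y _ => by positivity)
        ⟨x, Finset.mem_univ x, pow_pos (norm_pos_iff.mpr hx) 2⟩
    rw [main_calc hK H R hR S hdisj f hfpos F hF hPD]
    refine mul_le_mul_of_nonneg_left (Finset.sum_le_sum fun r _ => ?_) (Nat.cast_nonneg _)
    have hb := rayleigh_bound (hHerm r) (fun i => (hμ r).2 ⟨i, rfl⟩)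
      (fun x => f r x * (((Real.sqrt (∑ y, ‖f r y‖ ^ 2) : ℝ) : ℂ))⁻¹)
    have hnorm : ∑ x, ‖f r x *
        (((Real.sqrt (∑ y, ‖f r y‖ ^ 2) : ℝ) : ℂ))⁻¹‖ ^ 2 = 1 := by
      simp only [norm_mul, norm_inv, Complex.norm_real, Real.norm_eq_abs,
        _root_.abs_of_nonneg (Real.sqrt_nonneg _), mul_pow, inv_pow,
        Real.sq_sqrt (hfpos r).le]
      rw [← Finset.sum_mul]
      exact mul_inv_cancel₀ (hfpos r).ne'
    rw [hnorm, mul_one] at hb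
    exact hb
  · intro α hα F hF
    have hceq : ∀ r, (∑ x, ‖α r * v r x‖ ^ 2) = ‖α r‖ ^ 2 := by
      intro r
      simp only [norm_mul, mul_pow]
      rw [← Finset.mul_sum, hvUnit r, mul_one]
    have hfpos : ∀ r, 0 < ∑ x, ‖α r * v r x‖ ^ 2 := fun r => by
      rw [hceq r]
      exact pow_pos (norm_pos_iff.mpr (hα r)) 2
    have hFF := gram_diag S hdisj (fun r x => α r * v r x) F hF
    have hPD : (Fᴴ * F).PosDef := by
      rw [hFF]
      exact Matrix.PosDef.diagonal fun r => Complex.zero_lt_real.mpr (hfpos r)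
    refine ⟨hPD, ?_⟩
    rw [main_calc hK H R hR S hdisj (fun r x => α r * v r x) hfpos F hF hPD]
    congr 1
    refine Finset.sum_congr rfl fun r _ => ?_
    have hgg : (fun x => (fun (r : Fin NRF) (x : {i // i ∈ S r}) => α r * v r x) r x *
        (((Real.sqrt (∑ y, ‖
(fun (r : Fin NRF) (x : {i // i ∈ S r}) => α r * v r x) r y‖ ^ 2) : ℝ) : ℂ))⁻¹)
        = (α r * (((Real.sqrt (∑ y, ‖α r * v r y‖ ^ 2) : ℝ) : ℂ))⁻¹) • v r := by
      funext x
      simp only [Pi.smul_apply, smul_eq_mul]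
      ring
    rw [hgg, quad_eigen _ (μ r) (v r) (hvEig r) (hvUnit r)]
    have habs : ‖α r *
        (((Real.sqrt (∑ y, ‖α r * v r y‖ ^ 2) : ℝ) : ℂ))⁻¹‖ ^ 2 = 1 := by
      rw [hceq r]
      simp only [norm_mul, norm_inv, Complex.norm_real, Real.norm_eq_abs,
        _root_.abs_of_nonneg (Real.sqrt_nonneg _), mul_pow, inv_pow,
        Real.sq_sqrt (pow_pos (norm_pos_iff.mpr (hα r)) 2).le]
      exact mul_inv_cancel₀ (pow_pos (norm_pos_iff.mpr (hα r)) 2).ne'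
    rw [habs, one_mul]
end

section
/- (Proposition 3, lower bound) Let R ∈ ℂ^{n×n} with n ≥ 2 be Hermitian with all diagonal entries equal to a common real value. Define the normalized Minkowski ℓ1-norm approximation λ̂_1(R) = (1/n) Σ_{i=1}^n Σ_{j=1}^n |R_{ij}|, and set m = Tr(R)/n and s = ( Tr(R²)/n − m² )^{1/2}. Then λ̂_1(R) ≥ m + s/(n−1)^{1/2}, i.e., the approximation λ̂_1 is at least the Wolkowicz–Styan lower bound on the largest eigenvalue λ_1(R). -/
open Matrix BigOperators

/-- Proposition 3, lower bound: For an `n × n` Hermitian matrix `R`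
(`n ≥ 2`) with constant diagonal, the normalized Minkowski ℓ1-norm approximation
`λ̂₁(R) = (1/n) ∑_{i,j} |R_{ij}|` is at least the Wolkowicz–Styan lower bound
`m + s/√(n−1)`, where `m = Tr(R)/n` and `s = √(Tr(R²)/n − m²)`. -/
theorem stmt_10 (n : ℕ) (hn : 2 ≤ n)
    (R : Matrix (Fin n) (Fin n) ℂ) (hR : R.IsHermitian)
    (c : ℝ) (hdiag : ∀ i, R i i = (c : ℂ))
    (m s : ℝ)
    (hm : m = (Matrix.trace R).re / n)
    (hs : s = Real.sqrt ((Matrix.trace (R * R)).re / n - m ^ 2)) :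
    m + s / Real.sqrt ((n : ℝ) - 1)
      ≤ (1 / n : ℝ) * ∑ i, ∑ j, ‖R i j‖ := by
  have hn0 : (0:ℝ) < n := by positivity
  have hn1 : (1:ℝ) ≤ (n:ℝ) := by exact_mod_cast Nat.one_le_of_lt hn
  set a : Fin n × Fin n → ℝ := fun p => ‖R p.1 p.2‖ with ha
  have ha_nonneg : ∀ p, 0 ≤ a p := fun p => norm_nonneg _
  have hsym : ∀ i j : Fin n, ‖R j i‖ = ‖R i j‖ := by
    intro i j
    rw [← hR.apply i j]
    exact (norm_star _).symm
  set D : Finset (Fin n × Fin n) := Finset.univ.offDiag with hD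
  set S : ℝ := ∑ p ∈ D, a p with hSdef
  set Q : ℝ := ∑ p ∈ D, a p ^ 2 with hQdef
  have hS0 : 0 ≤ S := Finset.sum_nonneg fun p _ => ha_nonneg p
  have hQ0 : 0 ≤ Q := Finset.sum_nonneg fun p _ => sq_nonneg _
  -- split the full double sum into diagonal and off-diagonal parts
  have hsplit : ∀ f : Fin n × Fin n → ℝ,
      (∑ i, ∑ j, f (i, j)) = (∑ i, f (i, i)) + ∑ p ∈ D, f p := by
    intro f
    rw [← Finset.sum_product', ← Finset.diag_union_offDiag (Finset.univ : Finset (Fin n)),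
      Finset.sum_union (Finset.disjoint_diag_offDiag _), Finset.sum_diag]
  -- m = c
  have htr : (Matrix.trace R).re = n * c := by
    simp only [Matrix.trace, Matrix.diag, hdiag]
    simp
  have hmc : m = c := by
    rw [hm, htr]; field_simp
  -- trace of R*R
  have hterm : ∀ i j : Fin n, R i j * R j i = ((a (i, j) ^ 2 : ℝ) : ℂ) := by
    intro i j
    rw [← hR.apply j i, RCLike.star_def, Complex.mul_conj]
    simp [ha, Complex.sq_norm]
  have htr2 : (Matrix.trace (R * R)).re = n * c ^ 2 + Q := by
    have h1 : Matrix.trace (R * R) = ∑ i, ∑ j, ((a (i, j) ^ 2 : ℝ) : ℂ) := by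
      simp only [Matrix.trace, Matrix.diag, Matrix.mul_apply]
      exact Finset.sum_congr rfl fun i _ => Finset.sum_congr rfl fun j _ => hterm i j
    have h2 : (Matrix.trace (R * R)).re = ∑ i, ∑ j, (fun p : Fin n × Fin n => a p ^ 2) (i, j) := by
      rw [h1, Complex.re_sum]
      refine Finset.sum_congr rfl fun i _ => ?_
      rw [Complex.re_sum]
      exact Finset.sum_congr rfl fun j _ => Complex.ofReal_re _
    rw [h2, hsplit fun p : Fin n × Fin n => a p ^ 2]
    congr 1
    have hdd : ∀ i : Fin n, a (i, i) ^ 2 = c ^ 2 := by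
      intro i
      simp only [ha, hdiag i, Complex.norm_real, Real.norm_eq_abs]
      exact sq_abs c
    rw [Finset.sum_congr rfl fun i _ => hdd i]
    simp [mul_comm]
  -- lower bound on the RHS sum
  have hRHS : n * c + S ≤ ∑ i, ∑ j, ‖R i j‖ := by
    have h1 : (∑ i, ∑ j, ‖R i j‖) = (∑ i : Fin n, ‖R i i‖) + S := by
      simpa using hsplit a
    rw [h1]
    have h2 : (n : ℝ) * c ≤ ∑ i : Fin n, ‖R i i‖ := by
      have : ∀ i : Fin n, c ≤ ‖R i i‖ := by
        intro i
        rw [hdiag i, Complex.norm_real, Real.norm_eq_abs]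
        exact le_abs_self c
      calc (n : ℝ) * c = ∑ _i : Fin n, c := by simp [mul_comm]
        _ ≤ _ := Finset.sum_le_sum fun i _ => this i
    linarith
  -- key inequality S^2 ≥ 2 Q
  have hkey : 2 * Q ≤ S ^ 2 := by
    have hswap : ∀ p : Fin n × Fin n, p ∈ D → a p + a (p.2, p.1) ≤ S := by
      intro p hp
      obtain ⟨-, -, hne⟩ := Finset.mem_offDiag.mp (hD ▸ hp)
      have hsub : ({p, (p.2, p.1)} : Finset (Fin n × Fin n)) ⊆ D := by
        intro q hq
        simp only [Finset.mem_insert, Finset.mem_singleton] at hq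
        rw [hD]
        rcases hq with h | h <;> subst h
        · exact Finset.mem_offDiag.mpr ⟨Finset.mem_univ _, Finset.mem_univ _, hne⟩
        · exact Finset.mem_offDiag.mpr ⟨Finset.mem_univ _, Finset.mem_univ _, hne.symm⟩
      have hpair : p ≠ (p.2, p.1) := fun h => hne (congrArg Prod.fst h)
      calc a p + a (p.2, p.1) = ∑ q ∈ ({p, (p.2, p.1)} : Finset _), a q := by
            rw [Finset.sum_pair hpair]
        _ ≤ S := Finset.sum_le_sum_of_subset_of_nonneg hsub fun q _ _ => ha_nonneg q
    calc 2 * Q = ∑ p ∈ D, a p * (a p + a (p.2, p.1)) := by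
          rw [hQdef, Finset.mul_sum]
          refine Finset.sum_congr rfl fun p _ => ?_
          have hap : a (p.2, p.1) = a p := hsym p.1 p.2
          rw [hap]; ring
      _ ≤ ∑ p ∈ D, a p * S :=
          Finset.sum_le_sum fun p hp =>
            mul_le_mul_of_nonneg_left (hswap p hp) (ha_nonneg p)
      _ = S ^ 2 := by rw [← Finset.sum_mul]; ring
  -- compute s
  have hs' : s = Real.sqrt (Q / n) := by
    rw [hs, htr2, hmc]
    congr 1
    field_simp
    ring
  have hstep : Real.sqrt (Q / n) / Real.sqrt ((n:ℝ) - 1) ≤ S / n := by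
    rw [← Real.sqrt_div' (Q / n) (by linarith : (0:ℝ) ≤ (n:ℝ) - 1)]
    have hSn0 : 0 ≤ S / n := div_nonneg hS0 hn0.le
    have h1 : Q / n / ((n:ℝ) - 1) ≤ (S / n) ^ 2 := by
      have hn2 : (2:ℝ) ≤ n := by exact_mod_cast hn
      rw [div_div, div_pow]
      rw [div_le_div_iff₀ (by nlinarith) (by positivity)]
      have h2 : (n:ℝ) ^ 2 ≤ 2 * ((n:ℝ) * ((n:ℝ) - 1)) := by nlinarith
      nlinarith [mul_le_mul_of_nonneg_left h2 hQ0]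
    calc Real.sqrt (Q / n / ((n:ℝ) - 1)) ≤ Real.sqrt ((S / n) ^ 2) :=
          Real.sqrt_le_sqrt h1
      _ = S / n := Real.sqrt_sq hSn0
  have hfin : c + S / n ≤ 1 / n * ∑ i, ∑ j, ‖R i j‖ := by
    have heq : c + S / n = 1 / n * ((n:ℝ) * c + S) := by field_simp
    rw [heq]
    exact mul_le_mul_of_nonneg_left hRHS (by positivity)
  calc m + s / Real.sqrt ((n:ℝ) - 1)
      = c + Real.sqrt (Q / n) / Real.sqrt ((n:ℝ) - 1) := by rw [hmc, hs']
    _ ≤ c + S / n := by linarith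
    _ ≤ _ := hfin
end
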